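/- Let V be a finite-dimensional real inner product space, T a symmetric positive-definite linear endomorphism of V (⟨T v, v⟩ > 0 for all v ≠ 0), and U a T-invariant subspace of V with orthogonal projection P = P_U. Suppose u ∈ V and μ > 0 satisfy ⟨T u, u⟩ = μ‖u‖², and suppose P u ≠ 0. Then 1/μ − ‖P u‖²/⟨T(P u), P u⟩ = (μ‖u − P u‖² − ⟨T(u − P u), u − P u⟩) / (μ · ⟨T(P u), P u⟩). (This is equation (2.8) of the paper, expressing the difference between the reciprocal Rayleigh quotient λ = 1/μ and the generalized Rayleigh quotient Rq(P u) = ‖P u‖²/⟨T(P u), P u⟩ of the projected vector.) -/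

import Mathlib

open scoped RealInnerProductSpace

/-- Equation (2.8): for a symmetric positive-definite `T` with `T`-invariant subspace `U`
(orthogonal projection `P`), a vector `u` with `⟪T u, u⟫ = μ ‖u‖²` (`μ > 0`) and `P u ≠ 0`,
the difference between the reciprocal Rayleigh quotient `1/μ` and the generalized Rayleigh
quotient `‖P u‖² / ⟪T (P u), P u⟫` equals
`(μ ‖u - P u‖² - ⟪T (u - P u), u - P u⟫) / (μ ⟪T (P u), P u⟫)`. -/
theorem reciprocal_rayleigh_difference {V : Type*} [NormedAddCommGroup V]
    [InnerProductSpace ℝ V] [FiniteDimensional ℝ V]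
    (T : V →ₗ[ℝ] V) (hT : T.IsSymmetric) (hTpos : ∀ v : V, v ≠ 0 → 0 < ⟪T v, v⟫)
    (U : Submodule ℝ V) (hU : ∀ x ∈ U, T x ∈ U)
    (u : V) (μ : ℝ) (hμ : 0 < μ) (hu : ⟪T u, u⟫ = μ * ‖u‖ ^ 2)
    (hPu : U.subtypeL.comp U.orthogonalProjectionOnto u ≠ 0) :
    1 / μ -
      ‖U.subtypeL.comp U.orthogonalProjectionOnto u‖ ^ 2 /
        ⟪T (U.subtypeL.comp U.orthogonalProjectionOnto u),
          U.subtypeL.comp U.orthogonalProjectionOnto u⟫ =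
    (μ * ‖u - U.subtypeL.comp U.orthogonalProjectionOnto u‖ ^ 2 -
        ⟪T (u - U.subtypeL.comp U.orthogonalProjectionOnto u),
          u - U.subtypeL.comp U.orthogonalProjectionOnto u⟫) /
      (μ * ⟪T (U.subtypeL.comp U.orthogonalProjectionOnto u),
          U.subtypeL.comp U.orthogonalProjectionOnto u⟫) := by
  set p : V := U.subtypeL.comp U.orthogonalProjectionOnto u with hp
  have hpU : p ∈ U := (U.orthogonalProjectionOnto u).2
  have hwU : u - p ∈ Uᗮ := Submodule.sub_starProjection_mem_orthogonal (K := U) u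
  have hTpU : T p ∈ U := hU p hpU
  have h1 : ⟪T p, u - p⟫ = 0 := hwU (T p) hTpU
  have h2 : ⟪T (u - p), p⟫ = 0 := by
    rw [hT, real_inner_comm]; exact h1
  have hpw : ⟪p, u - p⟫ = 0 := hwU p hpU
  have hdecomp : u = p + (u - p) := by abel
  have e1 : ⟪T u, u⟫ = ⟪T p, p⟫ + ⟪T (u - p), u - p⟫ := by
    nth_rewrite 1 [hdecomp]; nth_rewrite 2 [hdecomp]
    simp only [map_add, map_sub, inner_add_left, inner_add_right, inner_sub_left,
      inner_sub_right]
    simp only [map_sub, inner_sub_left, inner_sub_right] at h1 h2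
    linarith
  have e2 : ‖u‖ ^ 2 = ‖p‖ ^ 2 + ‖u - p‖ ^ 2 := by
    nth_rewrite 1 [hdecomp]
    rw [norm_add_sq_real, hpw]; ring
  have hTpp : 0 < ⟪T p, p⟫ := hTpos p hPu
  have hμ' : μ ≠ 0 := ne_of_gt hμ
  have hTpp' : ⟪T p, p⟫ ≠ 0 := ne_of_gt hTpp
  have hkey : ⟪T p, p⟫ - μ * ‖p‖ ^ 2 = μ * ‖u - p‖ ^ 2 - ⟪T (u - p), u - p⟫ := by
    rw [e1, e2] at hu; linarith
  simp only [map_sub, inner_sub_left, inner_sub_right] at hkey ⊢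
  field_simp
  linear_combination hkey
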